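/- Let X ⊆ P^N be an irreducible projective variety such that no Hadamard power X^{⋆m} equals P^N. If 𝟙 ∈ X, then there exists r ≥ 1 such that X^{⋆r} is a proper Hadamard-idempotent subvariety of P^N, i.e., (X^{⋆r})^{⋆2} = X^{⋆r} ≠ P^N. -/

import Mathlib

/-- The Zariski closure of a subset of affine space `ℂ^n`: the set of points on which every
polynomial vanishing identically on `S` vanishes. -/
def zariskiClosure {n : ℕ} (S : Set (Fin n → ℂ)) : Set (Fin n → ℂ) :=
  {x | ∀ p : MvPolynomial (Fin n) ℂ, (∀ y ∈ S, MvPolynomial.eval y p = 0) →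
    MvPolynomial.eval x p = 0}

/-- A set is Zariski closed if it equals its Zariski closure. -/
def IsZariskiClosed {n : ℕ} (S : Set (Fin n → ℂ)) : Prop :=
  zariskiClosure S = S

/-- Irreducibility with respect to the Zariski topology. -/
def ZariskiIrreducible {n : ℕ} (S : Set (Fin n → ℂ)) : Prop :=
  S.Nonempty ∧ ∀ C₁ C₂ : Set (Fin n → ℂ), IsZariskiClosed C₁ → IsZariskiClosed C₂ →
    S ⊆ C₁ ∪ C₂ → S ⊆ C₁ ∨ S ⊆ C₂

/-- The Hadamard product of two subsets (affine cones over projective varieties): the Zariski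
closure of the set of coordinatewise products `x ⋆ y` which are defined (i.e. nonzero). -/
def hadamardSetProd {n : ℕ} (X Y : Set (Fin n → ℂ)) : Set (Fin n → ℂ) :=
  zariskiClosure {z | ∃ x ∈ X, ∃ y ∈ Y, z = x * y ∧ x * y ≠ 0}

/-- Hadamard powers: `X^{⋆1} = X` and `X^{⋆(m+1)} = X ⋆ X^{⋆m}`. -/
def hadamardPow {n : ℕ} (X : Set (Fin n → ℂ)) : ℕ → Set (Fin n → ℂ)
  | 0 => {1}
  | 1 => X
  | (m + 2) => hadamardSetProd X (hadamardPow X (m + 1))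

open MvPolynomial

namespace HadamardAux

variable {n : ℕ}

/-- raw product set -/
def SP (A B : Set (Fin n → ℂ)) : Set (Fin n → ℂ) :=
  {z | ∃ x ∈ A, ∃ y ∈ B, z = x * y ∧ x * y ≠ 0}

lemma hadamardSetProd_eq (A B : Set (Fin n → ℂ)) :
    hadamardSetProd A B = zariskiClosure (SP A B) := rfl

lemma subset_cl (S : Set (Fin n → ℂ)) : S ⊆ zariskiClosure S :=
  fun x hx p hp => hp x hx

lemma cl_mono {S T : Set (Fin n → ℂ)} (h : S ⊆ T) : zariskiClosure S ⊆ zariskiClosure T :=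
  fun x hx p hp => hx p (fun y hy => hp y (h hy))

lemma vanish_cl {S : Set (Fin n → ℂ)} {p : MvPolynomial (Fin n) ℂ}
    (hp : ∀ y ∈ S, MvPolynomial.eval y p = 0) :
    ∀ y ∈ zariskiClosure S, MvPolynomial.eval y p = 0 :=
  fun y hy => hy p hp

lemma cl_cl (S : Set (Fin n → ℂ)) : zariskiClosure (zariskiClosure S) = zariskiClosure S := by
  apply Set.Subset.antisymm
  · intro x hx p hp
    exact hx p (vanish_cl hp)
  · exact subset_cl _

lemma cl_closed (S : Set (Fin n → ℂ)) : IsZariskiClosed (zariskiClosure S) := cl_cl S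

/-- zero loci are closed -/
lemma zeroLocus_closed (F : Set (MvPolynomial (Fin n) ℂ)) :
    IsZariskiClosed {x | ∀ p ∈ F, MvPolynomial.eval x p = 0} := by
  apply Set.Subset.antisymm
  · intro x hx p hp
    exact hx p (fun y hy => hy p hp)
  · exact subset_cl _

lemma eval_scale (y x : Fin n → ℂ) (p : MvPolynomial (Fin n) ℂ) :
    MvPolynomial.eval x (MvPolynomial.bind₁ (fun i => C (y i) * X i) p)
      = MvPolynomial.eval (fun i => y i * x i) p := by
  have h := MvPolynomial.eval₂Hom_bind₁ (RingHom.id ℂ) x (fun i => C (y i) * X i) p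
  simpa using h

lemma SP_comm (A B : Set (Fin n → ℂ)) : SP A B = SP B A := by
  ext z
  constructor <;> rintro ⟨x, hx, y, hy, rfl, hne⟩
  · exact ⟨y, hy, x, hx, mul_comm x y, by rwa [mul_comm]⟩
  · exact ⟨y, hy, x, hx, mul_comm x y, by rwa [mul_comm]⟩

lemma SP_cl_left (A B : Set (Fin n → ℂ)) :
    SP (zariskiClosure A) B ⊆ zariskiClosure (SP A B) := by
  rintro z ⟨x, hx, y, hy, rfl, hne⟩
  have hne' : ∃ i, x i * y i ≠ 0 := by
    by_contra h
    push_neg at h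
    exact hne (funext fun i => h i)
  obtain ⟨i₀, hi₀⟩ := hne'
  intro p hp
  -- q vanishes on A
  set q : MvPolynomial (Fin n) ℂ := X i₀ * MvPolynomial.bind₁ (fun i => C (y i) * X i) p with hq
  have hqA : ∀ a ∈ A, MvPolynomial.eval a q = 0 := by
    intro a ha
    rw [hq, map_mul, eval_X, eval_scale]
    by_cases hay : a * y = 0
    · have : a i₀ * y i₀ = 0 := congrFun hay i₀
      have hy0 : y i₀ ≠ 0 := fun h => hi₀ (by rw [h, mul_zero])
      have : a i₀ = 0 := by
        rcases mul_eq_zero.mp this with h | h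
        · exact h
        · exact absurd h hy0
      rw [this, zero_mul]
    · have : MvPolynomial.eval (fun i => y i * a i) p = 0 := by
        have : (fun i => y i * a i) = a * y := funext fun i => mul_comm (y i) (a i)
        rw [this]
        exact hp _ ⟨a, ha, y, hy, rfl, hay⟩
      rw [this, mul_zero]
  have hx0 : MvPolynomial.eval x q = 0 := hx q hqA
  rw [hq, map_mul, eval_X, eval_scale] at hx0
  have hxi : x i₀ ≠ 0 := fun h => hi₀ (by rw [h, zero_mul])
  have : MvPolynomial.eval (fun i => y i * x i) p = 0 := by
    rcases mul_eq_zero.mp hx0 with h | h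
    · exact absurd h hxi
    · exact h
  have hxy : (fun i => y i * x i) = x * y := funext fun i => mul_comm (y i) (x i)
  rwa [hxy] at this

lemma SP_cl_right (A B : Set (Fin n → ℂ)) :
    SP A (zariskiClosure B) ⊆ zariskiClosure (SP A B) := by
  rw [SP_comm A, SP_comm A B]
  exact SP_cl_left B A

lemma prod_cl_left (A B : Set (Fin n → ℂ)) :
    hadamardSetProd (zariskiClosure A) B = hadamardSetProd A B := by
  apply Set.Subset.antisymm
  · have h1 : zariskiClosure (SP (zariskiClosure A) B) ⊆ zariskiClosure (zariskiClosure (SP A B)) :=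
      cl_mono (SP_cl_left A B)
    rw [cl_cl] at h1
    exact h1
  · exact cl_mono (fun z hz => by
      obtain ⟨x, hx, y, hy, rfl, hne⟩ := hz
      exact ⟨x, subset_cl A hx, y, hy, rfl, hne⟩)

lemma prod_cl_right (A B : Set (Fin n → ℂ)) :
    hadamardSetProd A (zariskiClosure B) = hadamardSetProd A B := by
  apply Set.Subset.antisymm
  · have h1 : zariskiClosure (SP A (zariskiClosure B)) ⊆ zariskiClosure (zariskiClosure (SP A B)) :=
      cl_mono (SP_cl_right A B)
    rw [cl_cl] at h1
    exact h1
  · exact cl_mono (fun z hz => by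
      obtain ⟨x, hx, y, hy, rfl, hne⟩ := hz
      exact ⟨x, hx, y, subset_cl B hy, rfl, hne⟩)

lemma SP_assoc (A B C : Set (Fin n → ℂ)) : SP A (SP B C) = SP (SP A B) C := by
  ext z
  constructor
  · rintro ⟨x, hx, w, ⟨y, hy, c, hc, rfl, hyc⟩, rfl, hne⟩
    have hxy : x * y ≠ 0 := by
      intro h
      apply hne
      funext i
      have := congrFun h i
      simp only [Pi.mul_apply, Pi.zero_apply] at this ⊢
      rw [← mul_assoc, this, zero_mul]
    refine ⟨x * y, ⟨x, hx, y, hy, rfl, hxy⟩, c, hc, ?_, ?_⟩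
    · rw [mul_assoc]
    · rw [mul_assoc]; exact hne
  · rintro ⟨w, ⟨x, hx, y, hy, rfl, hxy⟩, c, hc, rfl, hne⟩
    have hyc : y * c ≠ 0 := by
      intro h
      apply hne
      funext i
      have := congrFun h i
      simp only [Pi.mul_apply, Pi.zero_apply] at this ⊢
      rw [mul_assoc, this, mul_zero]
    refine ⟨x, hx, y * c, ⟨y, hy, c, hc, rfl, hyc⟩, ?_, ?_⟩
    · rw [mul_assoc]
    · rw [← mul_assoc]; exact hne

lemma prod_assoc (A B C : Set (Fin n → ℂ)) :
    hadamardSetProd A (hadamardSetProd B C) = hadamardSetProd (hadamardSetProd A B) C := by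
  have h1 : hadamardSetProd A (hadamardSetProd B C) = zariskiClosure (SP A (SP B C)) := by
    rw [hadamardSetProd_eq, ← hadamardSetProd_eq A (SP B C)]
    exact prod_cl_right A (SP B C)
  have h2 : hadamardSetProd (hadamardSetProd A B) C = zariskiClosure (SP (SP A B) C) := by
    rw [hadamardSetProd_eq, ← hadamardSetProd_eq (SP A B) C]
    exact prod_cl_left (SP A B) C
  rw [h1, h2, SP_assoc]

lemma prod_comm (A B : Set (Fin n → ℂ)) : hadamardSetProd A B = hadamardSetProd B A := by
  rw [hadamardSetProd_eq, hadamardSetProd_eq, SP_comm]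

end HadamardAux

namespace HadamardAux

variable {n : ℕ}

lemma pow_succ_eq (X : Set (Fin n → ℂ)) {m : ℕ} (hm : 1 ≤ m) :
    hadamardPow X (m + 1) = hadamardSetProd X (hadamardPow X m) := by
  obtain ⟨k, rfl⟩ : ∃ k, m = k + 1 := ⟨m - 1, (Nat.succ_pred_eq_of_pos hm).symm⟩
  rfl

lemma pow_add (X : Set (Fin n → ℂ)) {a b : ℕ} (ha : 1 ≤ a) (hb : 1 ≤ b) :
    hadamardSetProd (hadamardPow X a) (hadamardPow X b) = hadamardPow X (a + b) := by
  induction a with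
  | zero => omega
  | succ a ih =>
    rcases Nat.eq_or_lt_of_le ha with h | h
    · -- a + 1 = 1, i.e. a = 0
      have ha0 : a = 0 := by omega
      subst ha0
      show hadamardSetProd (hadamardPow X 1) (hadamardPow X b) = hadamardPow X (1 + b)
      rw [show (1 + b) = b + 1 by omega, pow_succ_eq X hb]
      rfl
    · have ha' : 1 ≤ a := by omega
      rw [pow_succ_eq X ha', ← prod_assoc, ih ha',
        show a + 1 + b = (a + b) + 1 by omega, pow_succ_eq X (by omega : 1 ≤ a + b)]

lemma one_ne_zero_pt : (1 : Fin (n + 1) → ℂ) ≠ 0 := by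
  intro h
  have := congrFun h 0
  simp at this

lemma one_mem_pow {X : Set (Fin (n + 1) → ℂ)} (hone : (1 : Fin (n + 1) → ℂ) ∈ X) :
    ∀ m, (1 : Fin (n + 1) → ℂ) ∈ hadamardPow X m := by
  intro m
  induction m with
  | zero => exact Set.mem_singleton _
  | succ m ih =>
    rcases Nat.eq_zero_or_pos m with h | h
    · subst h; exact hone
    · rw [pow_succ_eq X h]
      exact subset_cl _ ⟨1, hone, 1, ih, by rw [mul_one], by rw [mul_one]; exact one_ne_zero_pt⟩

/-- closures of cones are cones -/
lemma cl_cone {S : Set (Fin n → ℂ)} (hS : ∀ c : ℂ, c ≠ 0 → ∀ x ∈ S, c • x ∈ S) :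
    ∀ c : ℂ, c ≠ 0 → ∀ x ∈ zariskiClosure S, c • x ∈ zariskiClosure S := by
  intro c hc x hx p hp
  have key : MvPolynomial.eval x (MvPolynomial.bind₁ (fun i => MvPolynomial.C c * MvPolynomial.X i) p) = 0 := by
    apply hx
    intro a ha
    rw [eval_scale (fun _ => c) a p]
    have : (fun i => c * a i) = c • a := by funext i; rfl
    rw [this]
    exact hp _ (hS c hc a ha)
  rw [eval_scale (fun _ => c) x p] at key
  have : (fun i => c * x i) = c • x := by funext i; rfl
  rwa [this] at key

lemma pow_cone {X : Set (Fin n → ℂ)} (hcone : ∀ c : ℂ, c ≠ 0 → ∀ x ∈ X, c • x ∈ X) :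
    ∀ m, 1 ≤ m → ∀ c : ℂ, c ≠ 0 → ∀ x ∈ hadamardPow X m, c • x ∈ hadamardPow X m := by
  intro m
  induction m with
  | zero => omega
  | succ m ih =>
    intro _ c hc x hx
    rcases Nat.eq_zero_or_pos m with h | h
    · subst h; exact hcone c hc x hx
    · rw [pow_succ_eq X h] at hx ⊢
      refine cl_cone ?_ c hc x hx
      rintro d hd z ⟨u, hu, v, hv, rfl, hne⟩
      refine ⟨d • u, hcone d hd u hu, v, hv, ?_, ?_⟩
      · funext i
        simp [mul_assoc]
      · intro hz
        apply hne
        funext i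
        have := congrFun hz i
        simp only [Pi.smul_apply, Pi.mul_apply, smul_eq_mul, Pi.zero_apply] at this ⊢
        rcases mul_eq_zero.mp this with h' | h'
        · rcases mul_eq_zero.mp h' with h'' | h''
          · exact absurd h'' hd
          · rw [h'', zero_mul]
        · rw [h', mul_zero]

/-- 0 is in the closure of the punctured line through 𝟙 -/
lemma zero_mem_cl_of_cone {S : Set (Fin n → ℂ)}
    (hS : ∀ c : ℂ, c ≠ 0 → (fun _ => c : Fin n → ℂ) ∈ S) :
    (0 : Fin n → ℂ) ∈ zariskiClosure S := by
  have hev : ∀ (p : MvPolynomial (Fin n) ℂ) (c : ℂ),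
      Polynomial.eval c (MvPolynomial.aeval (fun _ => Polynomial.X : Fin n → Polynomial ℂ) p)
        = MvPolynomial.eval (fun _ => c : Fin n → ℂ) p := by
    intro p c
    induction p using MvPolynomial.induction_on with
    | C a => simp
    | add p q hp hq => simp [hp, hq]
    | mul_X p i hp => simp [hp]
  intro p hp
  set f : Polynomial ℂ := MvPolynomial.aeval (fun _ => Polynomial.X : Fin n → Polynomial ℂ) p with hf
  have hev : ∀ c : ℂ, Polynomial.eval c f = MvPolynomial.eval (fun _ => c : Fin n → ℂ) p :=
    fun c => hev p c
  have hroots : {x : ℂ | f.IsRoot x}.Infinite := by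
    apply Set.Infinite.mono (s := {c : ℂ | c ≠ 0})
    · intro c hc
      show f.IsRoot c
      unfold Polynomial.IsRoot
      rw [hev c]
      exact hp _ (hS c hc)
    · have : ({0}ᶜ : Set ℂ) = {c : ℂ | c ≠ 0} := by ext; simp
      rw [← this]
      exact Set.Finite.infinite_compl (Set.finite_singleton 0)
  have hf0 : f = 0 := Polynomial.eq_zero_of_infinite_isRoot f hroots
  have := hev 0
  rw [hf0] at this
  simp only [Polynomial.eval_zero] at this
  have h0 : (fun _ => (0:ℂ) : Fin n → ℂ) = 0 := by funext; rfl
  rw [h0] at this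
  exact this.symm

lemma pow_mono {X : Set (Fin (n + 1) → ℂ)}
    (hcone : ∀ c : ℂ, c ≠ 0 → ∀ x ∈ X, c • x ∈ X)
    (hone : (1 : Fin (n + 1) → ℂ) ∈ X) {m : ℕ} (hm : 1 ≤ m) :
    hadamardPow X m ⊆ hadamardPow X (m + 1) := by
  have heq : hadamardPow X (m + 1) = hadamardSetProd (hadamardPow X m) X := by
    rw [show m + 1 = m + 1 from rfl, ← pow_add X hm (le_refl 1)]
    rfl
  rw [heq]
  intro z hz
  by_cases h0 : z = 0
  · subst h0
    apply zero_mem_cl_of_cone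
    intro c hc
    have h1m : (1 : Fin (n+1) → ℂ) ∈ hadamardPow X m := one_mem_pow hone m
    have hcm : (fun _ => c : Fin (n+1) → ℂ) ∈ hadamardPow X m := by
      have := pow_cone hcone m hm c hc 1 h1m
      have he : c • (1 : Fin (n+1) → ℂ) = (fun _ => c) := by funext i; simp
      rwa [he] at this
    refine ⟨(fun _ => c), hcm, 1, hone, ?_, ?_⟩
    · funext i; simp
    · intro h
      have := congrFun h 0
      simp at this
      exact hc this
  · intro p hp
    exact hp _ ⟨z, hz, 1, hone, by rw [mul_one], by rw [mul_one]; exact h0⟩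

end HadamardAux

namespace HadamardAux

variable {n : ℕ}

/-- The key irreducibility lemma: Hadamard product of irreducible sets is irreducible. -/
lemma irr_prod {A B : Set (Fin n → ℂ)} (hA : ZariskiIrreducible A) (hB : ZariskiIrreducible B)
    (hne : (SP A B).Nonempty) : ZariskiIrreducible (hadamardSetProd A B) := by
  constructor
  · exact hne.mono (subset_cl _)
  intro C₁ C₂ hC₁ hC₂ hsub
  -- the raw set is contained in the union
  have hSP : SP A B ⊆ C₁ ∪ C₂ := fun z hz => hsub (subset_cl _ hz)
  -- auxiliary polynomials
  let q (b : Fin n → ℂ) (p : MvPolynomial (Fin n) ℂ) (j : Fin n) : MvPolynomial (Fin n) ℂ :=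
    X j * C (b j) * MvPolynomial.bind₁ (fun i => C (b i) * X i) p
  have hq_eval : ∀ b p j (a : Fin n → ℂ),
      MvPolynomial.eval a (q b p j) = a j * b j * MvPolynomial.eval (a * b) p := by
    intro b p j a
    show MvPolynomial.eval a (X j * C (b j) * _) = _
    rw [map_mul, map_mul, eval_X, eval_C, eval_scale]
    have : (fun i => b i * a i) = a * b := funext fun i => mul_comm (b i) (a i)
    rw [this]
  -- slices
  let Abig (C : Set (Fin n → ℂ)) (b : Fin n → ℂ) : Set (Fin n → ℂ) :=
    {a | ∀ p : MvPolynomial (Fin n) ℂ, (∀ z ∈ C, MvPolynomial.eval z p = 0) → ∀ j,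
      a j * b j * MvPolynomial.eval (a * b) p = 0}
  have hAbig_closed : ∀ C b, IsZariskiClosed (Abig C b) := by
    intro C b
    have : Abig C b = {a | ∀ p' ∈ {q' | ∃ p j, (∀ z ∈ C, MvPolynomial.eval z p = 0) ∧ q' = q b p j},
        MvPolynomial.eval a p' = 0} := by
      ext a
      constructor
      · rintro ha p' ⟨p, j, hp, rfl⟩
        rw [hq_eval]
        exact ha p hp j
      · intro ha p hp j
        have := ha (q b p j) ⟨p, j, hp, rfl⟩
        rwa [hq_eval] at this
    rw [this]
    exact zeroLocus_closed _
  -- second-round slices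
  let Bbig (C : Set (Fin n → ℂ)) : Set (Fin n → ℂ) :=
    {b | ∀ a ∈ A, a ∈ Abig C b}
  have hBbig_closed : ∀ C, IsZariskiClosed (Bbig C) := by
    intro C
    have : Bbig C = {b | ∀ p' ∈ {q' | ∃ a p j, a ∈ A ∧ (∀ z ∈ C, MvPolynomial.eval z p = 0) ∧
        q' = q a p j}, MvPolynomial.eval b p' = 0} := by
      ext b
      constructor
      · rintro hb p' ⟨a, p, j, ha, hp, rfl⟩
        rw [hq_eval]
        have := hb a ha p hp j
        rw [show b * a = a * b from mul_comm b a, mul_comm (b j) (a j)]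
        exact this
      · intro hb a ha p hp j
        have := hb (q a p j) ⟨a, p, j, ha, hp, rfl⟩
        rw [hq_eval] at this
        rw [show a * b = b * a from mul_comm a b, mul_comm (a j) (b j)]
        exact this
    rw [this]
    exact zeroLocus_closed _
  -- first application of irreducibility of A
  have hstep1 : ∀ b ∈ B, A ⊆ Abig C₁ b ∨ A ⊆ Abig C₂ b := by
    intro b hb
    apply hA.2 _ _ (hAbig_closed C₁ b) (hAbig_closed C₂ b)
    intro a ha
    by_cases hab : a * b = 0
    · left
      intro p hp j
      have : a j * b j = 0 := congrFun hab j
      rw [this, zero_mul]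
    · have : a * b ∈ C₁ ∪ C₂ := hSP ⟨a, ha, b, hb, rfl, hab⟩
      rcases this with h | h
      · left
        intro p hp j
        rw [hp _ h, mul_zero]
      · right
        intro p hp j
        rw [hp _ h, mul_zero]
  -- second application: B is covered by the two closed sets Bbig
  have hstep2 : B ⊆ Bbig C₁ ∨ B ⊆ Bbig C₂ := by
    apply hB.2 _ _ (hBbig_closed C₁) (hBbig_closed C₂)
    intro b hb
    rcases hstep1 b hb with h | h
    · left; exact fun a ha => h ha
    · right; exact fun a ha => h ha
  -- conclude
  have final : ∀ C : Set (Fin n → ℂ), IsZariskiClosed C → B ⊆ Bbig C →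
      hadamardSetProd A B ⊆ C := by
    intro C hC hBC
    have hSPC : SP A B ⊆ C := by
      rintro z ⟨a, ha, b, hb, rfl, hab⟩
      have hj : ∃ j, a j * b j ≠ 0 := by
        by_contra h
        push_neg at h
        exact hab (funext fun j => h j)
      obtain ⟨j, hj⟩ := hj
      rw [← hC]
      intro p hp
      have := hBC hb a ha p hp j
      rcases mul_eq_zero.mp this with h | h
      · exact absurd h hj
      · exact h
    calc hadamardSetProd A B = zariskiClosure (SP A B) := rfl
      _ ⊆ zariskiClosure C := cl_mono hSPC
      _ = C := hC
  rcases hstep2 with h | h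
  · exact Or.inl (final C₁ hC₁ h)
  · exact Or.inr (final C₂ hC₂ h)

lemma pow_irr {X : Set (Fin (n + 1) → ℂ)} (hirr : ZariskiIrreducible X)
    (hone : (1 : Fin (n + 1) → ℂ) ∈ X) :
    ∀ m, 1 ≤ m → ZariskiIrreducible (hadamardPow X m) := by
  intro m
  induction m with
  | zero => omega
  | succ m ih =>
    intro _
    rcases Nat.eq_zero_or_pos m with h | h
    · subst h; exact hirr
    · rw [pow_succ_eq X h]
      exact irr_prod hirr (ih h)
        ⟨1, 1, hone, 1, one_mem_pow hone m, by rw [mul_one], by rw [mul_one]; exact one_ne_zero_pt⟩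

lemma pow_closed {X : Set (Fin (n + 1) → ℂ)} (hclosed : IsZariskiClosed X) :
    ∀ m, 1 ≤ m → IsZariskiClosed (hadamardPow X m) := by
  intro m hm
  rcases Nat.lt_or_ge m 2 with h | h
  · have : m = 1 := by omega
    subst this; exact hclosed
  · obtain ⟨k, rfl⟩ : ∃ k, m = k + 2 := ⟨m - 2, by omega⟩
    exact cl_closed _

/-- vanishing ideal -/
noncomputable def vanishingIdeal (V : Set (Fin n → ℂ)) : Ideal (MvPolynomial (Fin n) ℂ) where
  carrier := {p | ∀ y ∈ V, MvPolynomial.eval y p = 0}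
  add_mem' := by
    intro p q hp hq y hy
    rw [map_add, hp y hy, hq y hy, add_zero]
  zero_mem' := by intro y hy; rw [map_zero]
  smul_mem' := by
    intro c p hp y hy
    rw [smul_eq_mul, map_mul, hp y hy, mul_zero]

lemma cl_eq_zeroLocus_vanishingIdeal (V : Set (Fin n → ℂ)) :
    zariskiClosure V = {x | ∀ p ∈ vanishingIdeal V, MvPolynomial.eval x p = 0} := by
  ext x
  exact ⟨fun hx p hp => hx p hp, fun hx p hp => hx p hp⟩

lemma vanishingIdeal_antitone {V W : Set (Fin n → ℂ)} (h : V ⊆ W) :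
    vanishingIdeal W ≤ vanishingIdeal V :=
  fun p hp y hy => hp y (h hy)

lemma eq_of_vanishingIdeal_eq {V W : Set (Fin n → ℂ)} (hV : IsZariskiClosed V)
    (hW : IsZariskiClosed W) (h : vanishingIdeal V = vanishingIdeal W) : V = W := by
  have : zariskiClosure V = zariskiClosure W := by
    rw [cl_eq_zeroLocus_vanishingIdeal, cl_eq_zeroLocus_vanishingIdeal, h]
  rwa [hV, hW] at this

lemma vanishingIdeal_prime {V : Set (Fin n → ℂ)} (hV : ZariskiIrreducible V) :
    (vanishingIdeal V).IsPrime := by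
  constructor
  · intro h
    obtain ⟨v, hv⟩ := hV.1
    have : MvPolynomial.eval v (1 : MvPolynomial (Fin n) ℂ) = 0 := by
      have h1 : (1 : MvPolynomial (Fin n) ℂ) ∈ vanishingIdeal V := h ▸ Submodule.mem_top
      exact h1 v hv
    rw [map_one] at this
    exact one_ne_zero this
  · intro p q hpq
    have hcov : V ⊆ {x | ∀ p' ∈ ({p} : Set _), MvPolynomial.eval x p' = 0} ∪
        {x | ∀ q' ∈ ({q} : Set _), MvPolynomial.eval x q' = 0} := by
      intro v hv
      have := hpq v hv
      rw [map_mul] at this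
      rcases mul_eq_zero.mp this with h | h
      · left; intro p' hp'; rw [Set.mem_singleton_iff.mp hp']; exact h
      · right; intro q' hq'; rw [Set.mem_singleton_iff.mp hq']; exact h
    rcases hV.2 _ _ (zeroLocus_closed {p}) (zeroLocus_closed {q}) hcov with h | h
    · left; intro y hy; exact h hy p rfl
    · right; intro y hy; exact h hy q rfl

end HadamardAux

namespace HadamardAux

open MvPolynomial

variable {n : ℕ}

/-- subalgebra generated by a set of coordinates -/
noncomputable def coordAlg (S : Finset (Fin n)) : Subalgebra ℂ (MvPolynomial (Fin n) ℂ) :=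
  Algebra.adjoin ℂ ((fun i => (X i : MvPolynomial (Fin n) ℂ)) '' ↑S)

/-- independence of an ideal from a set of coordinates -/
def indep (p : Ideal (MvPolynomial (Fin n) ℂ)) (S : Finset (Fin n)) : Prop :=
  ∀ g ∈ coordAlg S, g ∈ p → g = 0

/-- decompose an element of `coordAlg (insert j S)` as a polynomial in `X j` with coefficients
in `coordAlg S` -/
lemma decomp {S : Finset (Fin n)} {j : Fin n} {g : MvPolynomial (Fin n) ℂ}
    (hg : g ∈ coordAlg (insert j S)) :
    ∃ P : Polynomial ↥(coordAlg S),
      Polynomial.eval (X j)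
        (P.map (algebraMap ↥(coordAlg S) (MvPolynomial (Fin n) ℂ))) = g := by
  induction hg using Algebra.adjoin_induction with
  | mem x hx =>
    obtain ⟨i, hi, rfl⟩ := hx
    rw [Finset.mem_coe, Finset.mem_insert] at hi
    rcases hi with rfl | hi
    · exact ⟨Polynomial.X, by rw [Polynomial.map_X, Polynomial.eval_X]⟩
    · refine ⟨Polynomial.C ⟨X i, Algebra.subset_adjoin ⟨i, hi, rfl⟩⟩, ?_⟩
      rw [Polynomial.map_C, Polynomial.eval_C]
      rfl
  | algebraMap c =>
    refine ⟨Polynomial.C (algebraMap ℂ ↥(coordAlg S) c), ?_⟩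
    rw [Polynomial.map_C, Polynomial.eval_C, ← IsScalarTower.algebraMap_apply]
  | add x y hx hy ihx ihy =>
    obtain ⟨P, hPe⟩ := ihx
    obtain ⟨Q, hQe⟩ := ihy
    exact ⟨P + Q, by rw [Polynomial.map_add, Polynomial.eval_add, hPe, hQe]⟩
  | mul x y hx hy ihx ihy =>
    obtain ⟨P, hPe⟩ := ihx
    obtain ⟨Q, hQe⟩ := ihy
    exact ⟨P * Q, by rw [Polynomial.map_mul, Polynomial.eval_mul, hPe, hQe]⟩

/-- from an algebraic relation in a domain, extract a relation with nonzero constant term -/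
lemma exists_const {R A : Type*} [CommRing R] [CommRing A] [IsDomain A] [Algebra R A]
    {a : A} (halg : IsAlgebraic R a) (ha : a ≠ 0) :
    ∃ c : R, c ≠ 0 ∧ ∃ d : A, algebraMap R A c = a * d := by
  obtain ⟨P, hP0, hPa⟩ := halg
  suffices H : ∀ (M : ℕ) (P : Polynomial R), P.natDegree ≤ M → P ≠ 0 →
      Polynomial.aeval a P = 0 → ∃ c : R, c ≠ 0 ∧ ∃ d : A, algebraMap R A c = a * d by
    exact H P.natDegree P le_rfl hP0 hPa
  intro M
  induction M with
  | zero =>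
    intro P hdeg hP0 hPa
    have hC : P = Polynomial.C (P.coeff 0) := Polynomial.eq_C_of_natDegree_le_zero hdeg
    refine ⟨P.coeff 0, fun h => hP0 (by rw [hC, h, map_zero]), 0, ?_⟩
    rw [mul_zero]
    have := hPa
    rw [hC, Polynomial.aeval_C] at this
    exact this
  | succ M ih =>
    intro P hdeg hP0 hPa
    have hkey : Polynomial.aeval a P =
        a * Polynomial.aeval a P.divX + algebraMap R A (P.coeff 0) := by
      conv_lhs => rw [← Polynomial.X_mul_divX_add P]
      rw [map_add, Polynomial.aeval_C, map_mul, Polynomial.aeval_X]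
    by_cases h0 : P.coeff 0 = 0
    · have hPd : P.divX ≠ 0 := by
        intro h
        apply hP0
        rw [← Polynomial.X_mul_divX_add P, h, mul_zero, h0, map_zero, add_zero]
      have hdiv : Polynomial.aeval a P.divX = 0 := by
        rw [hPa, h0, map_zero, add_zero] at hkey
        rcases mul_eq_zero.mp hkey.symm with h | h
        · exact absurd h ha
        · exact h
      refine ih P.divX ?_ hPd hdiv
      have := Polynomial.natDegree_divX_eq_natDegree_tsub_one (p := P)
      omega
    · refine ⟨P.coeff 0, h0, -(Polynomial.aeval a P.divX), ?_⟩
      rw [hPa] at hkey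
      rw [mul_neg]
      linear_combination -hkey

end HadamardAux

namespace HadamardAux

open MvPolynomial

variable {n : ℕ}

set_option maxHeartbeats 1600000 in
set_option synthInstance.maxHeartbeats 400000 in
lemma key {p q : Ideal (MvPolynomial (Fin n) ℂ)} (hp : p.IsPrime) (hq : q.IsPrime)
    (hpq : p ≤ q) (S : Finset (Fin n)) (hpS : indep p S) (hqS : indep q S)
    (hmax : ∀ j ∉ S, ¬ indep p (insert j S)) : q ≤ p := by
  haveI := hp
  let mk : MvPolynomial (Fin n) ℂ →ₐ[ℂ] (MvPolynomial (Fin n) ℂ ⧸ p) := Ideal.Quotient.mkₐ ℂ p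
  have hmk_zero : ∀ x : MvPolynomial (Fin n) ℂ, mk x = 0 ↔ x ∈ p := by
    intro x
    rw [show mk x = Ideal.Quotient.mk p x from rfl, Ideal.Quotient.eq_zero_iff_mem]
  set B : Subalgebra ℂ (MvPolynomial (Fin n) ℂ ⧸ p) := (coordAlg S).map mk with hB
  -- the canonical map coordAlg S → B
  let ψ : ↥(coordAlg S) →+* ↥B :=
    { toFun := fun g => ⟨mk g.1, ⟨g.1, g.2, rfl⟩⟩
      map_one' := by ext; simp
      map_mul' := by intro x y; ext; simp
      map_zero' := by ext; simp
      map_add' := by intro x y; ext; simp }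
  have hψB : (algebraMap ↥B (MvPolynomial (Fin n) ℂ ⧸ p)).comp ψ =
      (↑mk : MvPolynomial (Fin n) ℂ →+* _).comp
        (algebraMap ↥(coordAlg S) (MvPolynomial (Fin n) ℂ)) := by
    ext x
    rfl
  -- every coordinate is algebraic over B
  have halgX : ∀ j : Fin n, IsAlgebraic ↥B (mk (X j)) := by
    intro j
    by_cases hj : j ∈ S
    · have hmem : mk (X j) ∈ B := ⟨X j, Algebra.subset_adjoin ⟨j, hj, rfl⟩, rfl⟩
      haveI : Nontrivial ↥B := by
        refine nontrivial_of_ne 0 1 (fun h => ?_)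
        have := congrArg (Subtype.val) h
        simpa using this
      have heq : mk (X j) = algebraMap ↥B _ (⟨mk (X j), hmem⟩ : ↥B) := rfl
      rw [heq]
      exact isAlgebraic_algebraMap _
    · have hni := hmax j hj
      unfold indep at hni
      push_neg at hni
      obtain ⟨g, hgmem, hgp, hgne⟩ := hni
      obtain ⟨P, hPeval⟩ := decomp hgmem
      refine ⟨P.map ψ, ?_, ?_⟩
      · intro hzero
        apply hgne
        have hPz : P = 0 := by
          apply Polynomial.ext
          intro i
          have hc : (P.map ψ).coeff i = 0 := by rw [hzero, Polynomial.coeff_zero]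
          rw [Polynomial.coeff_map] at hc
          have hc2 : mk (P.coeff i).1 = 0 := congrArg Subtype.val hc
          have h3 : (P.coeff i).1 = 0 := hpS _ (P.coeff i).2 ((hmk_zero _).mp hc2)
          rw [Polynomial.coeff_zero]
          exact Subtype.ext (by rw [h3]; rfl)
        rw [← hPeval, hPz, Polynomial.map_zero, Polynomial.eval_zero]
      · rw [Polynomial.aeval_def, Polynomial.eval₂_map, hψB, ← Polynomial.eval₂_map,
          show mk (X j) = (↑mk : MvPolynomial (Fin n) ℂ →+* _) (X j) from rfl,
          Polynomial.eval₂_at_apply, hPeval]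
        exact (hmk_zero g).mpr hgp
  -- instance plumbing for fraction fields
  haveI hBA_inj : Function.Injective (algebraMap ↥B (MvPolynomial (Fin n) ℂ ⧸ p)) :=
    fun x y hxy => Subtype.ext hxy
  haveI : IsDomain ↥B := Function.Injective.isDomain _ hBA_inj
  letI L := FractionRing (MvPolynomial (Fin n) ℂ ⧸ p)
  have hBL_inj : Function.Injective (algebraMap ↥B L) := by
    rw [IsScalarTower.algebraMap_eq ↥B (MvPolynomial (Fin n) ℂ ⧸ p) L]
    exact (IsFractionRing.injective (MvPolynomial (Fin n) ℂ ⧸ p) L).comp hBA_inj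
  haveI : FaithfulSMul ↥B L := (faithfulSMul_iff_algebraMap_injective _ _).mpr hBL_inj
  letI K := FractionRing ↥B
  letI : Algebra K L := FractionRing.liftAlgebra ↥B L
  haveI : IsScalarTower ↥B K L := FractionRing.isScalarTower_liftAlgebra ↥B L
  -- the generators of L over K are algebraic
  have halgL : ∀ j : Fin n, IsAlgebraic K
      (algebraMap (MvPolynomial (Fin n) ℂ ⧸ p) L (mk (X j))) := by
    intro j
    exact (IsFractionRing.isAlgebraic_iff ↥B K L).mp (halgX j).algebraMap
  set M := IntermediateField.adjoin K
    (Set.range fun j => algebraMap (MvPolynomial (Fin n) ℂ ⧸ p) L (mk (X j))) with hM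
  have hMalg : Algebra.IsAlgebraic K M := by
    apply IntermediateField.isAlgebraic_adjoin
    rintro x ⟨j, rfl⟩
    exact (halgL j).isIntegral
  -- the image of the quotient ring lands in M
  have himg : ∀ a : MvPolynomial (Fin n) ℂ ⧸ p,
      algebraMap (MvPolynomial (Fin n) ℂ ⧸ p) L a ∈ M := by
    intro a
    have htop : a ∈ Algebra.adjoin ℂ (Set.range fun j => mk (X j)) := by
      have h1 : (Algebra.adjoin ℂ (Set.range (X : Fin n → MvPolynomial (Fin n) ℂ))).map mk =
          Algebra.adjoin ℂ (Set.range fun j => mk (X j)) := by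
        rw [AlgHom.map_adjoin, ← Set.range_comp]
        rfl
      rw [adjoin_range_X, Algebra.map_top] at h1
      have h2 : mk.range = ⊤ := by
        rw [AlgHom.range_eq_top]
        exact Ideal.Quotient.mkₐ_surjective ℂ p
      rw [h2] at h1
      rw [← h1]
      trivial
    induction htop using Algebra.adjoin_induction with
    | mem x hx =>
      obtain ⟨j, rfl⟩ := hx
      exact IntermediateField.subset_adjoin _ _ ⟨j, rfl⟩
    | algebraMap c =>
      have heq : algebraMap (MvPolynomial (Fin n) ℂ ⧸ p) L
            (algebraMap ℂ (MvPolynomial (Fin n) ℂ ⧸ p) c) =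
          algebraMap K L (algebraMap ↥B K
            ⟨algebraMap ℂ (MvPolynomial (Fin n) ℂ ⧸ p) c, B.algebraMap_mem c⟩) := by
        rw [← IsScalarTower.algebraMap_apply ↥B K L,
          IsScalarTower.algebraMap_apply ↥B (MvPolynomial (Fin n) ℂ ⧸ p) L]
        rfl
      rw [heq]
      exact M.algebraMap_mem _
    | add x y hx hy ihx ihy =>
      rw [map_add]
      exact add_mem ihx ihy
    | mul x y hx hy ihx ihy =>
      rw [map_mul]
      exact mul_mem ihx ihy
  -- every element of the quotient is algebraic over B
  have halgA : ∀ a : MvPolynomial (Fin n) ℂ ⧸ p, IsAlgebraic ↥B a := by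
    intro a
    have h1 : IsAlgebraic K (algebraMap (MvPolynomial (Fin n) ℂ ⧸ p) L a) := by
      have h0 := hMalg.isAlgebraic
        (⟨algebraMap (MvPolynomial (Fin n) ℂ ⧸ p) L a, himg a⟩ : M)
      exact (IntermediateField.isAlgebraic_iff).mp h0
    have h2 : IsAlgebraic ↥B (algebraMap (MvPolynomial (Fin n) ℂ ⧸ p) L a) :=
      (IsFractionRing.isAlgebraic_iff ↥B K L).mpr h1
    exact (isAlgebraic_algebraMap_iff
      (IsFractionRing.injective (MvPolynomial (Fin n) ℂ ⧸ p) L)).mp h2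
  -- conclude
  intro f hfq
  by_contra hfp
  have ha : mk f ≠ 0 := fun h => hfp ((hmk_zero f).mp h)
  obtain ⟨c, hc0, d, hd⟩ := exists_const (halgA (mk f)) ha
  obtain ⟨g, hgS, hgmk⟩ := c.2
  obtain ⟨h, hh⟩ := Ideal.Quotient.mkₐ_surjective ℂ p d
  have hgc : mk g = (c : MvPolynomial (Fin n) ℂ ⧸ p) := hgmk
  have hmem : g - f * h ∈ p := by
    rw [← hmk_zero]
    have hceq : (c : MvPolynomial (Fin n) ℂ ⧸ p) = mk f * d := by rw [← hd]; rfl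
    rw [map_sub, map_mul, hh, hgc, hceq, sub_self]
  have hgq : g ∈ q := by
    have h1 : g - f * h ∈ q := hpq hmem
    have h2 : f * h ∈ q := Ideal.mul_mem_right _ _ hfq
    have := Ideal.add_mem q h1 h2
    simpa using this
  have hg0 : g = 0 := hqS g hgS hgq
  apply hc0
  apply Subtype.ext
  show (c : MvPolynomial (Fin n) ℂ ⧸ p) = 0
  rw [← hgc, hg0, map_zero]

end HadamardAux

namespace HadamardAux

open MvPolynomial

variable {n : ℕ}

open scoped Classical

lemma indep_empty {p : Ideal (MvPolynomial (Fin n) ℂ)} (hp : p ≠ ⊤) : indep p ∅ := by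
  intro g hg hgp
  have : g ∈ (⊥ : Subalgebra ℂ (MvPolynomial (Fin n) ℂ)) := by
    have he : coordAlg (∅ : Finset (Fin n)) = ⊥ := by
      unfold coordAlg
      rw [Finset.coe_empty, Set.image_empty, Algebra.adjoin_empty]
    rwa [he] at hg
  obtain ⟨c, rfl⟩ := Algebra.mem_bot.mp this
  by_cases hc : c = 0
  · rw [hc, map_zero]
  · exfalso
    apply hp
    exact Ideal.eq_top_of_isUnit_mem p hgp ((isUnit_iff_ne_zero.mpr hc).map _)

/-- a crude dimension invariant for ideals -/
noncomputable def dInv (p : Ideal (MvPolynomial (Fin n) ℂ)) : ℕ :=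
  Nat.findGreatest (fun k => ∃ S : Finset (Fin n), S.card = k ∧ indep p S) n

lemma dInv_ge {p : Ideal (MvPolynomial (Fin n) ℂ)} {S : Finset (Fin n)} (h : indep p S) :
    S.card ≤ dInv p := by
  unfold dInv
  apply Nat.le_findGreatest
  · calc S.card ≤ (Finset.univ : Finset (Fin n)).card := Finset.card_le_univ S
      _ = n := by rw [Finset.card_univ, Fintype.card_fin]
  · exact ⟨S, rfl, h⟩

lemma dInv_spec {p : Ideal (MvPolynomial (Fin n) ℂ)} (hp : p ≠ ⊤) :
    ∃ S : Finset (Fin n), S.card = dInv p ∧ indep p S := by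
  unfold dInv
  exact Nat.findGreatest_spec (P := fun k => ∃ S : Finset (Fin n), S.card = k ∧ indep p S)
    (Nat.zero_le n) ⟨∅, Finset.card_empty, indep_empty hp⟩

lemma dInv_strict_anti {p q : Ideal (MvPolynomial (Fin n) ℂ)} (hp : p.IsPrime) (hq : q.IsPrime)
    (hpq : p < q) : dInv q < dInv p := by
  obtain ⟨S, hScard, hqS⟩ := dInv_spec hq.ne_top
  have hpS : indep p S := fun g hg hgp => hqS g hg (hpq.le hgp)
  have hle : dInv q ≤ dInv p := hScard ▸ dInv_ge hpS
  rcases lt_or_eq_of_le hle with h | h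
  · exact h
  · exfalso
    have hmax : ∀ j ∉ S, ¬ indep p (insert j S) := by
      intro j hj hind
      have h1 := dInv_ge hind
      rw [Finset.card_insert_of_notMem hj, hScard, h] at h1
      omega
    exact (not_le_of_gt hpq) (key hp hq hpq.le S hpS hqS hmax)

lemma no_strictAnti_primes :
    ¬ ∃ f : ℕ → Ideal (MvPolynomial (Fin n) ℂ),
      (∀ m, (f m).IsPrime) ∧ (∀ m, f (m + 1) < f m) := by
  rintro ⟨f, hprime, hanti⟩
  have hstep : ∀ m, dInv (f m) < dInv (f (m + 1)) :=
    fun m => dInv_strict_anti (hprime (m + 1)) (hprime m) (hanti m)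
  have hgrow : ∀ m, m ≤ dInv (f m) := by
    intro m
    induction m with
    | zero => exact Nat.zero_le _
    | succ m ih => exact Nat.succ_le_of_lt (lt_of_le_of_lt ih (hstep m))
  have hbound : dInv (f (n + 1)) ≤ n := by
    unfold dInv
    exact Nat.findGreatest_le n
  have := hgrow (n + 1)
  omega

end HadamardAux

/-- Let `X ⊆ ℙ^N` be an irreducible projective variety (affine cone model) none of
whose Hadamard powers equals `ℙ^N`.  If `𝟙 ∈ X`, then there exists `r ≥ 1` such that `X^{⋆r}` is
a proper Hadamard-idempotent subvariety of `ℙ^N`, i.e. `(X^{⋆r})^{⋆2} = X^{⋆r} ≠ ℙ^N`. -/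
theorem exists_hadamard_idempotent_power (N : ℕ) (X : Set (Fin (N + 1) → ℂ))
    (hclosed : IsZariskiClosed X) (hirr : ZariskiIrreducible X)
    (hcone : ∀ c : ℂ, c ≠ 0 → ∀ x ∈ X, c • x ∈ X)
    (hone : (1 : Fin (N + 1) → ℂ) ∈ X)
    (hproper : ∀ m : ℕ, 1 ≤ m → hadamardPow X m ≠ Set.univ) :
    ∃ r : ℕ, 1 ≤ r ∧
      hadamardSetProd (hadamardPow X r) (hadamardPow X r) = hadamardPow X r ∧
      hadamardPow X r ≠ Set.univ := by
  classical
  by_cases hstab : ∃ m, 1 ≤ m ∧ hadamardPow X (m + 1) = hadamardPow X m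
  · obtain ⟨m, hm, heq⟩ := hstab
    have hALL : ∀ k, m ≤ k → hadamardPow X k = hadamardPow X m := by
      intro k hk
      induction k, hk using Nat.le_induction with
      | base => rfl
      | succ k hk ih =>
        rw [HadamardAux.pow_succ_eq X (le_trans hm hk), ih, ← HadamardAux.pow_succ_eq X hm, heq]
    refine ⟨m, hm, ?_, hproper m hm⟩
    rw [HadamardAux.pow_add X hm hm, hALL (m + m) (by omega)]
  · push_neg at hstab
    exfalso
    apply HadamardAux.no_strictAnti_primes (n := N + 1)
    refine ⟨fun m => HadamardAux.vanishingIdeal (hadamardPow X (m + 1)), fun m => ?_, fun m => ?_⟩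
    · exact HadamardAux.vanishingIdeal_prime (HadamardAux.pow_irr hirr hone (m + 1) (by omega))
    · have hsub : hadamardPow X (m + 1) ⊆ hadamardPow X (m + 1 + 1) :=
        HadamardAux.pow_mono hcone hone (by omega)
      have hle := HadamardAux.vanishingIdeal_antitone hsub
      refine lt_of_le_of_ne hle ?_
      intro heq2
      apply hstab (m + 1) (by omega)
      exact HadamardAux.eq_of_vanishingIdeal_eq
        (HadamardAux.pow_closed hclosed (m + 1 + 1) (by omega))
        (HadamardAux.pow_closed hclosed (m + 1) (by omega)) heq2
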